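/- For every integer N_r ≥ 2, the SRS event probabilities sum to one: (N_r − 1)/(2N_r − 1) + (N_r + 1)/(2(2N_r − 1)) + ∑_{k=4}^{N_r+1} [2·N_r·C(N_r, k−1) / ((2N_r − (k−1))·C(2N_r, k−1))] + ∑_{k=4}^{N_r+2} [2·(N_r − 1)·C(N_r, k−2) / ((2N_r − (k−2))·(2N_r − (k−1))·C(2N_r, k−2))] = 1 (the first sum being empty when N_r = 2). -/

import Mathlib

noncomputable def srsA (N j : ℕ) : ℚ := (N.choose j : ℚ) / ((2 * N).choose j : ℚ)

noncomputable def srsB (N j : ℕ) : ℚ := srsA N j / (2 * (N : ℚ) - j)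

lemma srs_choose_ne (N j : ℕ) (hj : j ≤ 2 * N) : (((2 * N).choose j : ℚ)) ≠ 0 := by
  exact_mod_cast (Nat.choose_pos hj).ne'

lemma srsA_step (N j : ℕ) (hN : 1 ≤ N) (hj : j ≤ N) :
    srsA N (j + 1) * (2 * (N : ℚ) - j) = srsA N j * ((N : ℚ) - j) := by
  have h2 : j + 1 ≤ 2 * N := by omega
  have c1 : (((2 * N).choose j : ℚ)) ≠ 0 := srs_choose_ne N j (by omega)
  have c2 : (((2 * N).choose (j + 1) : ℚ)) ≠ 0 := srs_choose_ne N (j + 1) h2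
  have e1 : (N.choose (j + 1) : ℚ) * (j + 1) = (N.choose j : ℚ) * ((N : ℚ) - j) := by
    have h := Nat.choose_succ_right_eq N j
    calc (N.choose (j + 1) : ℚ) * (j + 1) = ((N.choose (j + 1) * (j + 1) : ℕ) : ℚ) := by
          push_cast; ring
      _ = ((N.choose j * (N - j) : ℕ) : ℚ) := by rw [h]
      _ = (N.choose j : ℚ) * ((N : ℚ) - j) := by push_cast [Nat.cast_sub hj]; ring
  have e2 : ((2 * N).choose (j + 1) : ℚ) * (j + 1) = ((2 * N).choose j : ℚ) * (2 * (N : ℚ) - j) := by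
    have h := Nat.choose_succ_right_eq (2 * N) j
    calc ((2 * N).choose (j + 1) : ℚ) * (j + 1) = (((2 * N).choose (j + 1) * (j + 1) : ℕ) : ℚ) := by
          push_cast; ring
      _ = (((2 * N).choose j * (2 * N - j) : ℕ) : ℚ) := by rw [h]
      _ = ((2 * N).choose j : ℚ) * (2 * (N : ℚ) - j) := by
          push_cast [Nat.cast_sub (show j ≤ 2 * N by omega)]; ring
  unfold srsA
  rw [div_mul_eq_mul_div, div_mul_eq_mul_div, div_eq_div_iff c2 c1]
  linear_combination ((2 * N).choose (j + 1) : ℚ) * e1 - (N.choose (j + 1) : ℚ) * e2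

lemma srsA_succ (N j : ℕ) (hN : 2 ≤ N) (hj : j ≤ N) :
    srsA N (j + 1) = srsA N j * ((N : ℚ) - j) / (2 * (N : ℚ) - j) := by
  have hd : (2 * (N : ℚ) - j) ≠ 0 := by
    have h1 : (j : ℚ) ≤ N := by exact_mod_cast hj
    have h2 : (2 : ℚ) ≤ N := by exact_mod_cast hN
    intro h; nlinarith
  rw [eq_div_iff hd]
  exact srsA_step N j (by omega) hj

lemma srs_den_ne (N j : ℕ) (hN : 2 ≤ N) (hj : j ≤ N) : (2 * (N : ℚ) - j) ≠ 0 := by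
  have h1 : (j : ℚ) ≤ N := by exact_mod_cast hj
  have h2 : (2 : ℚ) ≤ N := by exact_mod_cast hN
  intro h; nlinarith

lemma term1_eq (N j : ℕ) (hN : 2 ≤ N) (hj : j ≤ N) :
    2 * (N : ℚ) * (N.choose j : ℚ) / ((2 * (N : ℚ) - (j : ℚ)) * (((2 * N).choose j : ℚ)))
      = 2 * srsA N j - 2 * srsA N (j + 1) := by
  rw [srsA_succ N j hN hj]
  have hd : (2 * (N : ℚ) - j) ≠ 0 := srs_den_ne N j hN hj
  have c1 : (((2 * N).choose j : ℚ)) ≠ 0 := srs_choose_ne N j (by omega)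
  unfold srsA
  field_simp
  ring

lemma term2_eq (N j : ℕ) (hN : 2 ≤ N) (hj : j ≤ N) :
    2 * ((N : ℚ) - 1) * (N.choose j : ℚ)
        / ((2 * (N : ℚ) - (j : ℚ)) * (2 * (N : ℚ) - ((j : ℚ) + 1)) * (((2 * N).choose j : ℚ)))
      = 2 * srsB N j - 2 * srsB N (j + 1) := by
  have hd : (2 * (N : ℚ) - j) ≠ 0 := srs_den_ne N j hN hj
  have hd' : (2 * (N : ℚ) - ((j : ℚ) + 1)) ≠ 0 := by
    have h1 : (j : ℚ) ≤ N := by exact_mod_cast hj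
    have h2 : (2 : ℚ) ≤ N := by exact_mod_cast hN
    intro h; nlinarith
  have c1 : (((2 * N).choose j : ℚ)) ≠ 0 := srs_choose_ne N j (by omega)
  unfold srsB
  rw [srsA_succ N j hN hj]
  have hcast : ((j + 1 : ℕ) : ℚ) = (j : ℚ) + 1 := by push_cast; ring
  rw [hcast]
  unfold srsA
  field_simp
  ring

lemma srsA_top (N : ℕ) : srsA N (N + 1) = 0 := by
  simp [srsA, Nat.choose_eq_zero_of_lt (by omega : N < N + 1)]

theorem SRS_probabilities_sum_to_one (Nr : ℕ) (hNr : 2 ≤ Nr) :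
    ((Nr : ℚ) - 1) / (2 * (Nr : ℚ) - 1)
      + ((Nr : ℚ) + 1) / (2 * (2 * (Nr : ℚ) - 1))
      + ∑ k ∈ Finset.Icc 4 (Nr + 1),
          (2 * (Nr : ℚ) * (Nr.choose (k - 1) : ℚ))
            / ((2 * (Nr : ℚ) - ((k : ℚ) - 1)) * (((2 * Nr).choose (k - 1) : ℚ)))
      + ∑ k ∈ Finset.Icc 4 (Nr + 2),
          (2 * ((Nr : ℚ) - 1) * (Nr.choose (k - 2) : ℚ))
            / ((2 * (Nr : ℚ) - ((k : ℚ) - 2)) * (2 * (Nr : ℚ) - ((k : ℚ) - 1))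
                * (((2 * Nr).choose (k - 2) : ℚ)))
      = 1 := by
  have hsum1 : (∑ k ∈ Finset.Icc 4 (Nr + 1),
      (2 * (Nr : ℚ) * (Nr.choose (k - 1) : ℚ))
        / ((2 * (Nr : ℚ) - ((k : ℚ) - 1)) * (((2 * Nr).choose (k - 1) : ℚ))))
      = 2 * srsA Nr 3 := by
    rw [← Finset.Ico_add_one_right_eq_Icc, Finset.sum_Ico_eq_sum_range]
    have hn : Nr + 1 + 1 - 4 = Nr - 2 := by omega
    rw [hn]
    have key : ∀ i ∈ Finset.range (Nr - 2),
        (2 * (Nr : ℚ) * (Nr.choose (4 + i - 1) : ℚ))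
          / ((2 * (Nr : ℚ) - (((4 + i : ℕ) : ℚ) - 1)) * (((2 * Nr).choose (4 + i - 1) : ℚ)))
        = (fun i => 2 * srsA Nr (i + 3)) i - (fun i => 2 * srsA Nr (i + 3)) (i + 1) := by
      intro i hi
      have hi' : i + 3 ≤ Nr := by
        have := Finset.mem_range.mp hi; omega
      have h1 : 4 + i - 1 = i + 3 := by omega
      have h2 : (2 * (Nr : ℚ) - (((4 + i : ℕ) : ℚ) - 1)) = 2 * (Nr : ℚ) - ((i + 3 : ℕ) : ℚ) := by
        push_cast; ring
      rw [h1, h2]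
      simpa using term1_eq Nr (i + 3) hNr hi'
    rw [Finset.sum_congr rfl key, Finset.sum_range_sub' (fun i => 2 * srsA Nr (i + 3)) (Nr - 2)]
    have h3 : Nr - 2 + 3 = Nr + 1 := by omega
    simp [h3, srsA_top]
  have hsum2 : (∑ k ∈ Finset.Icc 4 (Nr + 2),
      (2 * ((Nr : ℚ) - 1) * (Nr.choose (k - 2) : ℚ))
        / ((2 * (Nr : ℚ) - ((k : ℚ) - 2)) * (2 * (Nr : ℚ) - ((k : ℚ) - 1))
            * (((2 * Nr).choose (k - 2) : ℚ))))
      = 2 * srsB Nr 2 := by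
    rw [← Finset.Ico_add_one_right_eq_Icc, Finset.sum_Ico_eq_sum_range]
    have hn : Nr + 2 + 1 - 4 = Nr - 1 := by omega
    rw [hn]
    have key : ∀ i ∈ Finset.range (Nr - 1),
        (2 * ((Nr : ℚ) - 1) * (Nr.choose (4 + i - 2) : ℚ))
          / ((2 * (Nr : ℚ) - (((4 + i : ℕ) : ℚ) - 2)) * (2 * (Nr : ℚ) - (((4 + i : ℕ) : ℚ) - 1))
              * (((2 * Nr).choose (4 + i - 2) : ℚ)))
        = (fun i => 2 * srsB Nr (i + 2)) i - (fun i => 2 * srsB Nr (i + 2)) (i + 1) := by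
      intro i hi
      have hi' : i + 2 ≤ Nr := by
        have := Finset.mem_range.mp hi; omega
      have h1 : 4 + i - 2 = i + 2 := by omega
      have h2 : (2 * (Nr : ℚ) - (((4 + i : ℕ) : ℚ) - 2)) = 2 * (Nr : ℚ) - ((i + 2 : ℕ) : ℚ) := by
        push_cast; ring
      have h2' : (2 * (Nr : ℚ) - (((4 + i : ℕ) : ℚ) - 1)) = 2 * (Nr : ℚ) - (((i + 2 : ℕ) : ℚ) + 1) := by
        push_cast; ring
      rw [h1, h2, h2']
      simpa using term2_eq Nr (i + 2) hNr hi'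
    rw [Finset.sum_congr rfl key, Finset.sum_range_sub' (fun i => 2 * srsB Nr (i + 2)) (Nr - 1)]
    have h3 : Nr - 1 + 2 = Nr + 1 := by omega
    simp [h3, srsB, srsA_top]
  rw [hsum1, hsum2]
  -- compute srsA Nr 1, 2, 3
  have hA0 : srsA Nr 0 = 1 := by
    simp [srsA]
  have hA1 : srsA Nr 1 = 1 / 2 := by
    have h := srsA_succ Nr 0 hNr (by omega)
    have hN0 : (Nr : ℚ) ≠ 0 := by
      have : (0:ℚ) < Nr := by exact_mod_cast (by omega : 0 < Nr)
      linarith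
    rw [hA0] at h
    simp only [Nat.cast_zero, sub_zero, one_mul] at h
    rw [h]
    field_simp
  have hA2 : srsA Nr 2 = ((Nr : ℚ) - 1) / (2 * (2 * (Nr : ℚ) - 1)) := by
    have h := srsA_succ Nr 1 hNr (by omega)
    rw [hA1] at h
    have hd : (2 * (Nr : ℚ) - 1) ≠ 0 := srs_den_ne Nr 1 hNr (by omega)
    rw [show (1:ℕ) + 1 = 2 from rfl] at h
    rw [h]
    push_cast
    field_simp
  have hA3 : srsA Nr 3 = srsA Nr 2 * ((Nr : ℚ) - 2) / (2 * (Nr : ℚ) - 2) := by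
    have h := srsA_succ Nr 2 hNr hNr
    rw [show (2:ℕ) + 1 = 3 from rfl] at h
    rw [h]
    push_cast
    ring
  have hd1 : (2 * (Nr : ℚ) - 1) ≠ 0 := srs_den_ne Nr 1 hNr (by omega)
  have hd2 : (2 * (Nr : ℚ) - 2) ≠ 0 := by
    have := srs_den_ne Nr 2 hNr hNr
    simpa using this
  rw [hA3, hA2, srsB, hA2]
  have hc2 : ((2:ℕ) : ℚ) = 2 := by norm_num
  rw [hc2]
  have hd3 : (Nr : ℚ) - 1 ≠ 0 := by
    have : (2:ℚ) ≤ Nr := by exact_mod_cast hNr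
    intro h; linarith
  field_simp
  rw [div_eq_iff (by rwa [mul_comm] at hd1)]
  ring
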